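/- Let R ∈ ℝ^{n×n} be symmetric positive definite, let v₁, …, vₙ ∈ ℝⁿ be R-orthonormal (vᵢᵀ R vⱼ = δᵢⱼ), and let H_M ∈ ℝ^{n×n} and λ₁, …, λₙ ≥ 0 satisfy H_M vⱼ = λⱼ R vⱼ. For 1 ≤ r ≤ n define the rank-r truncated preconditioner E₀ = R⁻¹ − Σ_{j=1}^{r} (λⱼ/(1+λⱼ)) vⱼ vⱼᵀ. Then the preconditioned Hessian E₀ (H_M + R) satisfies E₀ (H_M + R) vⱼ = vⱼ for every j ≤ r, and E₀ (H_M + R) vⱼ = (1 + λⱼ) vⱼ for every j > r. -/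

import Mathlib

open Matrix

/-- The rank-`r` truncated preconditioner
`E₀ = R⁻¹ − Σ_{j<r} (λⱼ/(1+λⱼ)) vⱼ vⱼᵀ`. -/
noncomputable def truncPrecond {n : ℕ} (R : Matrix (Fin n) (Fin n) ℝ)
    (v : Fin n → Fin n → ℝ) (lam : Fin n → ℝ) (r : ℕ) :
    Matrix (Fin n) (Fin n) ℝ :=
  R⁻¹ - ∑ j ∈ Finset.univ.filter (fun j : Fin n => (j : ℕ) < r),
    (lam j / (1 + lam j)) • vecMulVec (v j) (v j)

lemma sum_mulVec' {n m : ℕ} (s : Finset (Fin m)) (A : Fin m → Matrix (Fin n) (Fin n) ℝ)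
    (x : Fin n → ℝ) : (∑ i ∈ s, A i).mulVec x = ∑ i ∈ s, (A i).mulVec x := by
  induction s using Finset.induction with
  | empty => simp [Matrix.mulVec]
  | insert _ _ h ih => simp [Finset.sum_insert h, Matrix.add_mulVec, ih]

lemma vecMulVec_mulVec' {n : ℕ} (w u x : Fin n → ℝ) :
    (vecMulVec w u).mulVec x = (u ⬝ᵥ x) • w := by
  funext k
  simp [Matrix.mulVec, vecMulVec_apply, dotProduct, Finset.mul_sum, mul_comm, mul_left_comm]

theorem stmt15 {n : ℕ} (R HM : Matrix (Fin n) (Fin n) ℝ) (hR : R.PosDef)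
    (v : Fin n → Fin n → ℝ)
    (horth : ∀ i j, v i ⬝ᵥ R.mulVec (v j) = if i = j then (1:ℝ) else 0)
    (lam : Fin n → ℝ) (hlam : ∀ j, 0 ≤ lam j)
    (heig : ∀ j, HM.mulVec (v j) = lam j • R.mulVec (v j))
    (r : ℕ) (hr1 : 1 ≤ r) (hrn : r ≤ n) :
    ∀ j : Fin n,
      ((j : ℕ) < r →
        ((truncPrecond R v lam r) * (HM + R)).mulVec (v j) = v j) ∧
      (r ≤ (j : ℕ) →
        ((truncPrecond R v lam r) * (HM + R)).mulVec (v j) = (1 + lam j) • v j) := by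
  have hinv : R⁻¹ * R = 1 := Matrix.nonsing_inv_mul R (isUnit_iff_ne_zero.mpr hR.det_pos.ne')
  intro j
  have hposj : (0:ℝ) < 1 + lam j := by linarith [hlam j]
  have hHR : (HM + R).mulVec (v j) = (1 + lam j) • R.mulVec (v j) := by
    rw [Matrix.add_mulVec, heig j]
    module
  have key : ((truncPrecond R v lam r) * (HM + R)).mulVec (v j)
      = (1 + lam j) • v j -
        (if (j : ℕ) < r then lam j • v j else 0) := by
    rw [← Matrix.mulVec_mulVec, hHR, Matrix.mulVec_smul, truncPrecond,
      Matrix.sub_mulVec, sum_mulVec']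
    have h1 : R⁻¹.mulVec (R.mulVec (v j)) = v j := by
      rw [Matrix.mulVec_mulVec, hinv, Matrix.one_mulVec]
    rw [h1]
    have h2 : ∀ i ∈ Finset.univ.filter (fun i : Fin n => (i : ℕ) < r),
        ((lam i / (1 + lam i)) • vecMulVec (v i) (v i)).mulVec (R.mulVec (v j))
        = if i = j then (lam j / (1 + lam j)) • v j else 0 := by
      intro i _
      rw [Matrix.smul_mulVec, vecMulVec_mulVec', horth i j]
      by_cases h : i = j <;> simp [h]
    rw [Finset.sum_congr rfl h2, Finset.sum_ite_eq' _ j]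
    by_cases hj : (j : ℕ) < r
    · simp only [Finset.mem_filter, Finset.mem_univ, hj, and_self, if_true]
      rw [smul_sub]
      congr 1
      rw [smul_smul]
      field_simp
    · simp only [Finset.mem_filter, Finset.mem_univ, hj, and_false, if_false]
      simp
  refine ⟨fun hj => ?_, fun hj => ?_⟩
  · rw [key, if_pos hj]
    module
  · rw [key, if_neg (not_lt.mpr hj), sub_zero]
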